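/- For all n ≥ 1, F_{2n+3} - 1 = ⌈Φ·(F_{2n+2} - 1)⌉, i.e. with u_k = F_{k+1}-1 one has u_{2n+2} = ⌈Φ·u_{2n+1}⌉. -/

import Mathlib

noncomputable def Φ : ℝ := (1 + Real.sqrt 5) / 2

theorem fib_sub_one_eq_ceil (n : ℕ) (hn : 1 ≤ n) :
    (Nat.fib (2 * n + 3) : ℤ) - 1 = ⌈Φ * ((Nat.fib (2 * n + 2) : ℝ) - 1)⌉ := by
  have hΦ : Φ = Real.goldenRatio := rfl
  have hkey := Real.fib_succ_sub_goldenRatio_mul_fib (2 * n + 2)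
  -- F(2n+3) - φ F(2n+2) = ψ^(2n+2)
  have hψ2 : Real.goldenConj ^ 2 = 2 - Real.goldenRatio := by
    rw [Real.goldenConj_sq]
    have := Real.goldenRatio_add_goldenConj
    linarith
  have hψ2pos : (0:ℝ) < Real.goldenConj ^ 2 := by
    rw [hψ2]; linarith [Real.goldenRatio_lt_two]
  have hψpos : (0:ℝ) < Real.goldenConj ^ (2 * n + 2) := by
    rw [show 2 * n + 2 = 2 * (n + 1) by ring, pow_mul]
    exact pow_pos hψ2pos _
  have hψ2lt : Real.goldenConj ^ 2 < 1 := by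
    rw [hψ2]; linarith [Real.one_lt_goldenRatio]
  have hlt : Real.goldenConj ^ (2 * n + 2) < 2 - Real.goldenRatio := by
    rw [← hψ2, show 2 * n + 2 = 2 * (n + 1) by ring, pow_mul]
    calc (Real.goldenConj ^ 2) ^ (n + 1) ≤ (Real.goldenConj ^ 2) ^ 2 :=
          pow_le_pow_of_le_one (le_of_lt hψ2pos) (le_of_lt hψ2lt) (by omega)
      _ < Real.goldenConj ^ 2 := by nlinarith
  symm
  rw [Int.ceil_eq_iff]
  have hx : Φ * ((Nat.fib (2 * n + 2) : ℝ) - 1)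
      = (Nat.fib (2 * n + 3) : ℝ) - Real.goldenConj ^ (2 * n + 2) - Real.goldenRatio := by
    rw [hΦ]
    have h23 : (2 : ℕ) * n + 3 = (2 * n + 2) + 1 := by ring
    rw [h23]
    push_cast
    linarith [hkey]
  rw [hx]
  push_cast
  constructor
  · linarith
  · linarith [Real.one_lt_goldenRatio]
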